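/- Let G be an ℵ₂-free abelian group, let D be a pure, finitely generated subgroup of G, let φ : D → ℤ be a group homomorphism, and let g ∈ G. Then there exists a pure, finitely generated subgroup D' of G with D ⊆ D' and g ∈ D', and a group homomorphism φ' : D' → ℤ extending φ. Moreover, D' decomposes as D' = D ⊕ C for some subgroup C of D'. -/

import Mathlib

/-- The density claim in the proof of Theorem 5.1.  Let `G` be an `ℵ₂`-free abelian group
(every subgroup of cardinality `≤ ℵ₁` is free abelian), `D` a pure, finitely generated
subgroup of `G`, `φ : D → ℤ` a homomorphism and `g ∈ G`.  Then there is a pure, finitely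
generated subgroup `D'` of `G` with `D ⊆ D'`, `g ∈ D'`, a homomorphism `φ' : D' → ℤ`
extending `φ`, and a decomposition `D' = D ⊕ C`. -/
theorem dense_extension_of_partial_hom
    (G : Type) [AddCommGroup G]
    (hG : ∀ S : AddSubgroup G, Cardinal.mk S ≤ Cardinal.aleph 1 → Module.Free ℤ S)
    (D : AddSubgroup G)
    (hDpure : ∀ n : ℕ, 0 < n → ∀ x ∈ D, (∃ g : G, (n : ℤ) • g = x) → ∃ u ∈ D, (n : ℤ) • u = x)
    (hDfg : D.FG) (φ : ↥D →+ ℤ) (g : G) :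
    ∃ D' : AddSubgroup G,
      (∀ n : ℕ, 0 < n → ∀ x ∈ D', (∃ g : G, (n : ℤ) • g = x) → ∃ u ∈ D', (n : ℤ) • u = x) ∧
      D'.FG ∧ D ≤ D' ∧ g ∈ D' ∧
      (∃ φ' : ↥D' →+ ℤ, ∀ (x : G) (hx : x ∈ D) (hx' : x ∈ D'), φ' ⟨x, hx'⟩ = φ ⟨x, hx⟩) ∧
      (∃ C : AddSubgroup G, C ≤ D' ∧ D ⊓ C = ⊥ ∧ D ⊔ C = D') := by
  classical
  have htf : ∀ (n : ℤ), n ≠ 0 → ∀ x : G, n • x = 0 → x = 0 := by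
    intro n hn x hx
    have hcard : Cardinal.mk ↥(AddSubgroup.zmultiples x) ≤ Cardinal.aleph 1 := by
      have h1 : Cardinal.mk ↥(AddSubgroup.zmultiples x) ≤ Cardinal.mk ℤ :=
        Cardinal.mk_le_of_surjective (f := fun k : ℤ =>
          (⟨k • x, AddSubgroup.zsmul_mem _ (AddSubgroup.mem_zmultiples x) k⟩ :
            ↥(AddSubgroup.zmultiples x)))
          (by rintro ⟨y, m, rfl⟩; exact ⟨m, rfl⟩)
      calc Cardinal.mk ↥(AddSubgroup.zmultiples x) ≤ Cardinal.mk ℤ := h1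
        _ = Cardinal.aleph0 := Cardinal.mk_int
        _ ≤ Cardinal.aleph 1 := by
            rw [← Cardinal.aleph_zero]; exact Cardinal.aleph_le_aleph.mpr (by norm_num)
    haveI := hG _ hcard
    have hy : (⟨x, AddSubgroup.mem_zmultiples x⟩ : ↥(AddSubgroup.zmultiples x)) = 0 := by
      have h0 : n • (⟨x, AddSubgroup.mem_zmultiples x⟩ : ↥(AddSubgroup.zmultiples x)) = 0 := by
        apply Subtype.ext
        push_cast
        exact hx
      rcases smul_eq_zero.mp h0 with h | h
      · exact absurd h hn
      · exact h
    simpa using congrArg Subtype.val hy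
  obtain ⟨S, hS⟩ := hDfg
  set E : AddSubgroup G := D ⊔ AddSubgroup.closure {g} with hE
  have hEfg : E.FG := by
    refine ⟨insert g S, ?_⟩
    rw [Finset.coe_insert, ← Set.singleton_union, AddSubgroup.closure_union, hS, sup_comm]
  -- the purification of E
  set D₁ : AddSubgroup G :=
    { carrier := {x | ∃ n : ℕ, 0 < n ∧ (n : ℤ) • x ∈ E}
      zero_mem' := ⟨1, one_pos, by simpa using E.zero_mem⟩
      add_mem' := by
        rintro a b ⟨n, hn, ha⟩ ⟨m, hm, hb⟩
        refine ⟨n * m, Nat.mul_pos hn hm, ?_⟩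
        push_cast
        rw [smul_add]
        refine AddSubgroup.add_mem _ ?_ ?_
        · rw [mul_comm, mul_smul]; exact AddSubgroup.zsmul_mem _ ha _
        · rw [mul_smul]; exact AddSubgroup.zsmul_mem _ hb _
      neg_mem' := by
        rintro a ⟨n, hn, ha⟩
        exact ⟨n, hn, by rw [smul_neg]; exact AddSubgroup.neg_mem _ ha⟩ } with hD₁
  have hmemD₁ : ∀ x : G, x ∈ D₁ ↔ ∃ n : ℕ, 0 < n ∧ (n : ℤ) • x ∈ E := fun x => Iff.rfl
  have hED₁ : E ≤ D₁ := fun e he => ⟨1, one_pos, by simpa using he⟩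
  have hDD₁ : D ≤ D₁ := fun d hd => hED₁ (AddSubgroup.mem_sup_left hd)
  have hgD₁ : g ∈ D₁ := hED₁ (AddSubgroup.mem_sup_right (AddSubgroup.subset_closure rfl))
  -- purity
  have hpure : ∀ n : ℕ, 0 < n → ∀ x ∈ D₁, (∃ g : G, (n : ℤ) • g = x) →
      ∃ u ∈ D₁, (n : ℤ) • u = x := by
    rintro n hn x hx ⟨y, hy⟩
    obtain ⟨m, hm, hmx⟩ := hx
    refine ⟨y, ⟨m * n, Nat.mul_pos hm hn, ?_⟩, hy⟩
    push_cast
    rw [mul_smul, hy]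
    exact hmx
  -- countability
  have hEc : Countable ↥E := by
    have : AddGroup.FG ↥E := (AddGroup.fg_iff_addSubgroup_fg E).mpr hEfg
    obtain ⟨T, hT⟩ := this.out
    haveI : Module.Finite ℤ ↥E := Module.Finite.iff_addGroup_fg.mpr ‹_›
    obtain ⟨n, f, hf⟩ := Module.Finite.exists_fin (R := ℤ) (M := ↥E)
    have hsurj : Function.Surjective (Fintype.linearCombination ℤ f) := by
      rw [← LinearMap.range_eq_top, Fintype.range_linearCombination, hf]
    exact hsurj.countable
  have hD₁c : Countable ↥D₁ := by
    have : ∀ x : ↥D₁, ∃ p : ℕ × ↥E, 0 < p.1 ∧ (p.1 : ℤ) • (x : G) = (p.2 : G) := by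
      rintro ⟨x, n, hn, hnx⟩
      exact ⟨(n, ⟨(n : ℤ) • x, hnx⟩), hn, rfl⟩
    choose f hf1 hf2 using this
    have hinj : Function.Injective f := by
      intro a b hab
      have h1 : (f a).1 = (f b).1 := by rw [hab]
      have h2 : ((f a).2 : G) = ((f b).2 : G) := by rw [hab]
      rw [← hf2 a, ← hf2 b, h1] at h2
      have : ((f b).1 : ℤ) • ((a : G) - (b : G)) = 0 := by
        rw [smul_sub, h2, sub_self]
      have := htf ((f b).1 : ℤ) (by exact_mod_cast (hf1 b).ne') _ this
      exact Subtype.ext (sub_eq_zero.mp this)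
    exact hinj.countable
  have hcard : Cardinal.mk ↥D₁ ≤ Cardinal.aleph 1 := by
    calc Cardinal.mk ↥D₁ ≤ Cardinal.aleph0 := Cardinal.mk_le_aleph0
      _ ≤ Cardinal.aleph 1 := by
          rw [← Cardinal.aleph_zero]; exact Cardinal.aleph_le_aleph.mpr (by norm_num)
  haveI hfree : Module.Free ℤ ↥D₁ := hG D₁ hcard
  -- D₁ is finitely generated
  obtain ⟨T, hT⟩ := hEfg
  have hTD₁ : ∀ t ∈ T, t ∈ D₁ := fun t ht => hED₁ (hT ▸ AddSubgroup.subset_closure ht)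
  set T₁ : Set ↥D₁ := {x : ↥D₁ | (x : G) ∈ T} with hT₁
  have hT₁fin : T₁.Finite := Set.Finite.preimage (Set.injOn_of_injective Subtype.val_injective)
    T.finite_toSet
  have hspanT₁ : ∀ x : ↥D₁, (x : G) ∈ E → x ∈ Submodule.span ℤ T₁ := by
    intro x hx
    set M : AddSubgroup G := ((Submodule.span ℤ T₁).toAddSubgroup).map D₁.subtype with hM
    have hEM : E ≤ M := by
      rw [← hT]
      refine AddSubgroup.closure_le _ |>.mpr ?_
      intro t ht
      exact ⟨⟨t, hTD₁ t ht⟩, Submodule.subset_span ht, rfl⟩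
    obtain ⟨y, hy, hyx⟩ := hEM hx
    rwa [← Subtype.ext hyx.symm] at hy
  set b := Module.Free.chooseBasis ℤ ↥D₁ with hb
  set ι := Module.Free.ChooseBasisIndex ℤ ↥D₁
  set Sb : Set ι := ⋃ t ∈ T₁, ↑(b.repr t).support with hSb
  have hSbfin : Sb.Finite := hT₁fin.biUnion (fun t _ => (b.repr t).support.finite_toSet)
  have hT₁span : T₁ ⊆ ↑(Submodule.span ℤ (b '' Sb)) := by
    intro t ht
    rw [SetLike.mem_coe, Module.Basis.mem_span_image]
    exact Set.subset_biUnion_of_mem (u := fun t => (↑(b.repr t).support : Set ι)) ht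
  have hsupp : ∀ x : ↥D₁, ↑(b.repr x).support ⊆ Sb := by
    intro x
    obtain ⟨n, hn, hnx⟩ := x.2
    have hz : ((n : ℤ) • x : ↥D₁) ∈ Submodule.span ℤ (b '' Sb) := by
      apply Submodule.span_le.mpr hT₁span
      apply hspanT₁
      push_cast
      exact hnx
    rw [Module.Basis.mem_span_image] at hz
    intro i hi
    rcases Finset.mem_coe.mp hi with hi'
    by_contra hiS
    have h0 : b.repr ((n : ℤ) • x) i = 0 := by
      by_contra h
      exact hiS (hz (Finsupp.mem_support_iff.mpr h))
    rw [map_smul, Finsupp.smul_apply, smul_eq_mul, mul_eq_zero] at h0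
    rcases h0 with h | h
    · exact absurd h (by exact_mod_cast hn.ne')
    · exact (Finsupp.mem_support_iff.mp hi') h
  have hιfin : Finite ι := by
    rw [← Set.finite_univ_iff]
    refine hSbfin.subset ?_
    intro j _
    have := hsupp (b j)
    rw [b.repr_self] at this
    exact this (by simp [Finsupp.support_single_ne_zero])
  haveI := hιfin
  haveI : Fintype ι := Fintype.ofFinite ι
  haveI hfin : Module.Finite ℤ ↥D₁ := Module.Finite.of_basis b
  have hD₁fg : D₁.FG :=
    (AddGroup.fg_iff_addSubgroup_fg D₁).mp (Module.Finite.iff_addGroup_fg.mp hfin)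
  -- the subgroup D inside D₁, as a submodule
  set Dsub : Submodule ℤ ↥D₁ := AddSubgroup.toIntSubmodule (D.addSubgroupOf D₁) with hDsubdef
  have hmemDsub : ∀ x : ↥D₁, x ∈ Dsub ↔ (x : G) ∈ D := by
    intro x
    rw [hDsubdef]
    exact AddSubgroup.mem_addSubgroupOf
  -- the quotient is torsion-free
  haveI hnz : NoZeroSMulDivisors ℤ (↥D₁ ⧸ Dsub) := by
    refine ⟨fun {c x} hcx => ?_⟩
    rcases eq_or_ne c 0 with hc | hc
    · exact Or.inl hc
    right
    obtain ⟨y, rfl⟩ := Submodule.mkQ_surjective Dsub x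
    rw [← map_smul, Submodule.mkQ_apply, Submodule.Quotient.mk_eq_zero] at hcx
    rw [Submodule.mkQ_apply, Submodule.Quotient.mk_eq_zero]
    rw [hmemDsub] at hcx ⊢
    have hcy : c • (y : G) ∈ D := by
      have : ((c • y : ↥D₁) : G) = c • (y : G) := by push_cast; rfl
      rwa [this] at hcx
    set n : ℕ := c.natAbs with hn'
    have hn : 0 < n := Int.natAbs_pos.mpr hc
    have hny : (n : ℤ) • (y : G) ∈ D := by
      rcases Int.natAbs_eq c with h | h
      · rw [← h]; exact hcy
      · rw [show ((n : ℤ)) = -c by omega, neg_smul]; exact D.neg_mem hcy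
    obtain ⟨u, hu, hun⟩ := hDpure n hn _ hny ⟨(y : G), rfl⟩
    have h0 : (n : ℤ) • (u - (y : G)) = 0 := by rw [smul_sub, hun, sub_self]
    have := htf (n : ℤ) (by exact_mod_cast hn.ne') _ h0
    rw [← sub_eq_zero.mp this]
    exact hu
  haveI : Module.Free ℤ (↥D₁ ⧸ Dsub) := Module.free_of_finite_type_torsion_free'
  obtain ⟨s, hs⟩ := LinearMap.exists_rightInverse_of_surjective Dsub.mkQ
    (Submodule.range_mkQ _)
  have hsq : ∀ q, Dsub.mkQ (s q) = q := fun q => congrFun (congrArg DFunLike.coe hs) q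
  set Csub : Submodule ℤ ↥D₁ := LinearMap.range s with hCsubdef
  have hdis : Dsub ⊓ Csub = ⊥ := by
    rw [eq_bot_iff]
    rintro x ⟨hxD, q, rfl⟩
    have h1 : Dsub.mkQ (s q) = q := hsq q
    have h2 : Dsub.mkQ (s q) = 0 := by
      rw [Submodule.mkQ_apply, Submodule.Quotient.mk_eq_zero]; exact hxD
    rw [h2] at h1
    simp [← h1]
  have hsup2 : Dsub ⊔ Csub = ⊤ := by
    rw [eq_top_iff]
    intro x _
    have hx1 : x - s (Dsub.mkQ x) ∈ Dsub := by
      rw [← Submodule.Quotient.mk_eq_zero, ← Submodule.mkQ_apply, map_sub, hsq, sub_self]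
    have hxeq : x = (x - s (Dsub.mkQ x)) + s (Dsub.mkQ x) := by abel
    rw [hxeq]
    exact Submodule.add_mem_sup hx1 ⟨_, rfl⟩
  have hcompl : IsCompl Dsub Csub := ⟨disjoint_iff.mpr hdis, codisjoint_iff.mpr hsup2⟩
  set proj := Submodule.linearProjOfIsCompl Dsub Csub hcompl with hproj
  -- the extended homomorphism
  have hmem' : ∀ y : ↥Dsub, ((y : ↥D₁) : G) ∈ D := fun y => (hmemDsub _).mp y.2
  set φ' : ↥D₁ →+ ℤ := AddMonoidHom.mk'
    (fun x => φ ⟨((proj x : ↥D₁) : G), hmem' _⟩)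
    (by
      intro x y
      show φ ⟨((proj (x + y) : ↥D₁) : G), hmem' _⟩ =
        φ ⟨((proj x : ↥D₁) : G), hmem' _⟩ + φ ⟨((proj y : ↥D₁) : G), hmem' _⟩
      refine Eq.trans (congrArg φ (Subtype.ext ?_)) (map_add φ
        ⟨((proj x : ↥D₁) : G), hmem' _⟩ ⟨((proj y : ↥D₁) : G), hmem' _⟩)
      show ((proj (x + y) : ↥D₁) : G) = _
      rw [map_add proj x y]
      push_cast
      rfl) with hφ'
  -- the complement as a subgroup of G
  set C : AddSubgroup G := (Csub.toAddSubgroup).map D₁.subtype with hC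
  have hCD₁ : C ≤ D₁ := by rintro _ ⟨y, _, rfl⟩; exact y.2
  refine ⟨D₁, hpure, hD₁fg, hDD₁, hgD₁, ⟨φ', ?_⟩, ⟨C, hCD₁, ?_, ?_⟩⟩
  · intro x hx hx'
    have hxDsub : (⟨x, hx'⟩ : ↥D₁) ∈ Dsub := (hmemDsub _).mpr hx
    have : proj ⟨x, hx'⟩ = ⟨⟨x, hx'⟩, hxDsub⟩ :=
      Submodule.linearProjOfIsCompl_apply_left hcompl ⟨⟨x, hx'⟩, hxDsub⟩
    rw [hφ']
    simp only [AddMonoidHom.mk'_apply, this]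
  · rw [eq_bot_iff]
    rintro x ⟨hxD, y, hy, rfl⟩
    have hyD : y ∈ Dsub := (hmemDsub y).mpr hxD
    have : y ∈ Dsub ⊓ Csub := ⟨hyD, hy⟩
    rw [hdis] at this
    rw [show y = 0 from this]
    simp
  · apply le_antisymm (sup_le hDD₁ hCD₁)
    intro x hx
    have hmem : (⟨x, hx⟩ : ↥D₁) ∈ Dsub ⊔ Csub := by rw [hsup2]; trivial
    obtain ⟨d, hd, c, hc, hdc⟩ := Submodule.mem_sup.mp hmem
    have hxval : x = (d : G) + (c : G) := by
      simpa using congrArg Subtype.val hdc.symm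
    rw [hxval]
    exact AddSubgroup.add_mem _
      (AddSubgroup.mem_sup_left ((hmemDsub d).mp hd))
      (AddSubgroup.mem_sup_right ⟨c, hc, rfl⟩)
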